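/- Let P be an n×n permutation matrix. Then for all i, j ∈ {1,…,n}, we have P_{i,j} = 1 if and only if rank(P_{≥i+1,≤j−1}) = rank(P_{≥i+1,≤j}) = rank(P_{≥i,≤j−1}) = rank(P_{≥i,≤j}) − 1, where P_{≥a,≤b} denotes the submatrix of rows with index at least a and columns with index at most b. -/

import Mathlib

open scoped Classical
open Finset Matrix

noncomputable section

/-- A linear extension of a finite poset, viewed as an order-preserving
bijection onto `Fin n`. -/
def IsLinExt {α : Type*} [PartialOrder α] {n : ℕ} (σ : α ≃ Fin n) : Prop :=
  ∀ a b : α, a ≤ b → σ a ≤ σ b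

/-- The Cartan matrix of a finite poset with respect to a linear extension. -/
def cartan {α : Type*} [PartialOrder α] {n : ℕ} (σ : α ≃ Fin n) :
    Matrix (Fin n) (Fin n) ℂ :=
  fun i j => if σ.symm j ≤ σ.symm i then 1 else 0

/-- Upper-triangular matrices. -/
def IsUpperTri {n : ℕ} (U : Matrix (Fin n) (Fin n) ℂ) : Prop :=
  ∀ i j : Fin n, j < i → U i j = 0

/-- The permutation matrix of `π`, with a `1` in row `i` and column `π i`. -/
def permMat {n : ℕ} (π : Equiv.Perm (Fin n)) : Matrix (Fin n) (Fin n) ℂ :=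
  fun i j => if π i = j then 1 else 0

/-- `π` is the (unique) permutation indexing the Bruhat cell of `W`,
i.e. `W ∈ B (permMat π) B` with `B` the invertible upper-triangular matrices. -/
def IsBruhatPerm {n : ℕ} (W : Matrix (Fin n) (Fin n) ℂ) (π : Equiv.Perm (Fin n)) : Prop :=
  ∃ U₁ U₂ : Matrix (Fin n) (Fin n) ℂ,
    IsUpperTri U₁ ∧ IsUpperTri U₂ ∧ IsUnit U₁.det ∧ IsUnit U₂.det ∧
      W = U₁ * permMat π * U₂

/-- Echelonmotion with respect to `σ`, given the Bruhat permutation `π` of the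
Cartan matrix: `ech σ π x = y` iff `permMat π` has a `1` in row `σ y`, column `σ x`. -/
def ech {α : Type*} [PartialOrder α] {n : ℕ} (σ : α ≃ Fin n) (π : Equiv.Perm (Fin n)) :
    α → α := fun x => σ.symm (π⁻¹ (σ x))

end

/-- The rank of the lower-left submatrix with rows of index `≥ a` and columns
of index `< b`. -/
noncomputable def llrank {n : ℕ} (M : Matrix (Fin n) (Fin n) ℂ) (a b : ℕ) : ℕ :=
  (M.submatrix (fun k : {k : Fin n // a ≤ (k : ℕ)} => (k : Fin n))
      (fun l : {l : Fin n // (l : ℕ) < b} => (l : Fin n))).rank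

lemma llrank_count {n : ℕ} (π : Equiv.Perm (Fin n)) (a b : ℕ) :
    llrank (permMat π) a b
      = (univ.filter fun k : Fin n => a ≤ (k : ℕ) ∧ ((π k : ℕ)) < b).card := by
  classical
  set R := {k : Fin n // a ≤ (k : ℕ)}
  set C := {l : Fin n // (l : ℕ) < b}
  set M : Matrix R C ℂ := (permMat π).submatrix (fun k : R => (k : Fin n)) (fun l : C => (l : Fin n))
  set T := {k : R // ((π (k : Fin n) : ℕ)) < b}
  have hf : LinearIndependent ℂ (fun k : T => (Pi.single (k : R) 1 : R → ℂ)) := by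
    have h2 := (Pi.basisFun ℂ R).linearIndependent.comp (fun k : T => (k : R)) Subtype.val_injective
    have he : (fun k : T => (Pi.single (k : R) 1 : R → ℂ))
        = (⇑(Pi.basisFun ℂ R) ∘ fun k : T => (k : R)) := by
      funext k; simp
    rw [he]; exact h2
  have hspan : Submodule.span ℂ (Set.range Mᵀ)
      = Submodule.span ℂ (Set.range fun k : T => (Pi.single (k : R) 1 : R → ℂ)) := by
    apply le_antisymm
    · rw [Submodule.span_le]
      rintro _ ⟨l, rfl⟩
      by_cases h : a ≤ ((π⁻¹ (l : Fin n) : Fin n) : ℕ)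
      · have hT : ((π ((⟨π⁻¹ (l : Fin n), h⟩ : R) : Fin n) : ℕ)) < b := by
          simp [l.2]
        have : Mᵀ l = Pi.single ((⟨⟨π⁻¹ (l : Fin n), h⟩, hT⟩ : T) : R) 1 := by
          funext k
          simp only [Matrix.transpose_apply, M, Matrix.submatrix_apply, permMat]
          rcases eq_or_ne (π (k : Fin n)) (l : Fin n) with he | he
          · have : k = (⟨π⁻¹ (l : Fin n), h⟩ : R) := by
              apply Subtype.ext
              simp [← he]
            simp [he, this, Pi.single_apply]
          · have : k ≠ (⟨π⁻¹ (l : Fin n), h⟩ : R) := by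
              intro hk; apply he; rw [hk]; simp
            simpa [he, Pi.single_apply] using this
        rw [this]
        exact Submodule.subset_span ⟨_, rfl⟩
      · have : Mᵀ l = 0 := by
          funext k
          simp only [Matrix.transpose_apply, M, Matrix.submatrix_apply, permMat]
          have : π (k : Fin n) ≠ (l : Fin n) := by
            intro he
            exact h (by simpa [← he] using k.2)
          simp [this]
        simp [this]
    · rw [Submodule.span_le]
      rintro _ ⟨k, rfl⟩
      have hC : ((π ((k : R) : Fin n) : ℕ)) < b := k.2
      have : (Pi.single ((k : R)) 1 : R → ℂ) = Mᵀ ⟨π ((k : R) : Fin n), hC⟩ := by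
        funext m
        simp only [Matrix.transpose_apply, M, Matrix.submatrix_apply, permMat]
        rcases eq_or_ne m (k : R) with rfl | hm
        · simp [Pi.single_apply]
        · have : π ((m : R) : Fin n) ≠ π ((k : R) : Fin n) := by
            exact fun h => hm (Subtype.ext (π.injective h))
          simp [this, Pi.single_apply, hm]
      beta_reduce
      rw [this]
      exact Submodule.subset_span ⟨_, rfl⟩
  have : llrank (permMat π) a b = Fintype.card T := by
    rw [llrank]
    rw [show ((permMat π).submatrix (fun k : {k : Fin n // a ≤ (k : ℕ)} => (k : Fin n))
      (fun l : {l : Fin n // (l : ℕ) < b} => (l : Fin n))) = M from rfl]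
    rw [Matrix.rank_eq_finrank_span_cols, show M.col = Mᵀ from rfl, hspan, finrank_span_eq_card hf]
  rw [this]
  rw [← Fintype.card_subtype]
  exact Fintype.card_congr (Equiv.subtypeSubtypeEquivSubtypeInter (fun x : Fin n => a ≤ (x:ℕ)) (fun x : Fin n => ((π x : ℕ)) < b))

lemma count_succ_col {n : ℕ} (π : Equiv.Perm (Fin n)) (a : ℕ) (j : Fin n) :
    (univ.filter fun k : Fin n => a ≤ (k : ℕ) ∧ ((π k : ℕ)) < (j : ℕ) + 1).card
      = (univ.filter fun k : Fin n => a ≤ (k : ℕ) ∧ ((π k : ℕ)) < (j : ℕ)).card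
        + if a ≤ ((π⁻¹ j : Fin n) : ℕ) then 1 else 0 := by
  classical
  have hsplit : (univ.filter fun k : Fin n => a ≤ (k : ℕ) ∧ ((π k : ℕ)) < (j : ℕ) + 1)
      = (univ.filter fun k : Fin n => a ≤ (k : ℕ) ∧ ((π k : ℕ)) < (j : ℕ))
        ∪ (univ.filter fun k : Fin n => a ≤ (k : ℕ) ∧ k = π⁻¹ j) := by
    ext k
    simp only [mem_filter, mem_union, mem_univ, true_and]
    constructor
    · rintro ⟨h1, h2⟩
      rcases Nat.lt_succ_iff_lt_or_eq.mp h2 with h | h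
      · exact Or.inl ⟨h1, h⟩
      · refine Or.inr ⟨h1, ?_⟩
        have : π k = j := Fin.ext h
        simp [← this]
    · rintro (⟨h1, h2⟩ | ⟨h1, rfl⟩)
      · exact ⟨h1, Nat.lt_succ_of_lt h2⟩
      · refine ⟨h1, ?_⟩
        simp [Nat.lt_succ_iff]
  have hdisj : Disjoint (univ.filter fun k : Fin n => a ≤ (k : ℕ) ∧ ((π k : ℕ)) < (j : ℕ))
      (univ.filter fun k : Fin n => a ≤ (k : ℕ) ∧ k = π⁻¹ j) := by
    rw [Finset.disjoint_left]
    rintro k hk1 hk2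
    simp only [mem_filter, mem_univ, true_and] at hk1 hk2
    rcases hk2 with ⟨-, rfl⟩
    simp at hk1
  rw [hsplit, Finset.card_union_of_disjoint hdisj]
  congr 1
  split_ifs with h
  · rw [show (univ.filter fun k : Fin n => a ≤ (k : ℕ) ∧ k = π⁻¹ j) = {π⁻¹ j} by
      ext k; simp only [mem_filter, mem_univ, true_and, mem_singleton]
      constructor
      · rintro ⟨-, rfl⟩; rfl
      · rintro rfl; exact ⟨h, rfl⟩]
    simp
  · rw [show (univ.filter fun k : Fin n => a ≤ (k : ℕ) ∧ k = π⁻¹ j) = ∅ by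
      ext k; simp only [mem_filter, mem_univ, true_and, notMem_empty, iff_false]
      rintro ⟨h1, rfl⟩; exact h h1]
    simp

lemma count_succ_row {n : ℕ} (π : Equiv.Perm (Fin n)) (i : Fin n) (b : ℕ) :
    (univ.filter fun k : Fin n => (i : ℕ) ≤ (k : ℕ) ∧ ((π k : ℕ)) < b).card
      = (univ.filter fun k : Fin n => (i : ℕ) + 1 ≤ (k : ℕ) ∧ ((π k : ℕ)) < b).card
        + if ((π i : ℕ)) < b then 1 else 0 := by
  classical
  have hsplit : (univ.filter fun k : Fin n => (i : ℕ) ≤ (k : ℕ) ∧ ((π k : ℕ)) < b)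
      = (univ.filter fun k : Fin n => (i : ℕ) + 1 ≤ (k : ℕ) ∧ ((π k : ℕ)) < b)
        ∪ (univ.filter fun k : Fin n => k = i ∧ ((π k : ℕ)) < b) := by
    ext k
    simp only [mem_filter, mem_union, mem_univ, true_and]
    constructor
    · rintro ⟨h1, h2⟩
      rcases eq_or_lt_of_le h1 with h | h
      · exact Or.inr ⟨Fin.ext h.symm, h2⟩
      · exact Or.inl ⟨h, h2⟩
    · rintro (⟨h1, h2⟩ | ⟨rfl, h2⟩)
      · exact ⟨Nat.le_of_succ_le h1, h2⟩
      · exact ⟨le_refl _, h2⟩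
  have hdisj : Disjoint (univ.filter fun k : Fin n => (i : ℕ) + 1 ≤ (k : ℕ) ∧ ((π k : ℕ)) < b)
      (univ.filter fun k : Fin n => k = i ∧ ((π k : ℕ)) < b) := by
    rw [Finset.disjoint_left]
    rintro k hk1 hk2
    simp only [mem_filter, mem_univ, true_and] at hk1 hk2
    rcases hk2 with ⟨rfl, -⟩
    omega
  rw [hsplit, Finset.card_union_of_disjoint hdisj]
  congr 1
  split_ifs with h
  · rw [show (univ.filter fun k : Fin n => k = i ∧ ((π k : ℕ)) < b) = {i} by
      ext k; simp only [mem_filter, mem_univ, true_and, mem_singleton]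
      constructor
      · rintro ⟨rfl, -⟩; rfl
      · rintro rfl; exact ⟨rfl, h⟩]
    simp
  · rw [show (univ.filter fun k : Fin n => k = i ∧ ((π k : ℕ)) < b) = ∅ by
      ext k; simp only [mem_filter, mem_univ, true_and, notMem_empty, iff_false]
      rintro ⟨rfl, h2⟩; exact h h2]
    simp

/-- For a permutation matrix `P`, the entry `P i j` equals 1 iff
rank(P_{>i,<j}) = rank(P_{>i,≤j}) = rank(P_{≥i,<j}) = rank(P_{≥i,≤j}) − 1. -/
theorem stmt5 {n : ℕ} (π : Equiv.Perm (Fin n)) (i j : Fin n) :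
    permMat π i j = 1 ↔
      (llrank (permMat π) ((i : ℕ) + 1) (j : ℕ)
          = llrank (permMat π) ((i : ℕ) + 1) ((j : ℕ) + 1) ∧
       llrank (permMat π) ((i : ℕ) + 1) ((j : ℕ) + 1)
          = llrank (permMat π) (i : ℕ) (j : ℕ) ∧
       llrank (permMat π) (i : ℕ) (j : ℕ) + 1
          = llrank (permMat π) (i : ℕ) ((j : ℕ) + 1)) := by
  classical
  have hentry : permMat π i j = 1 ↔ π i = j := by
    unfold permMat
    split_ifs with h
    · simp [h]
    · simp [h]
  rw [hentry]
  simp only [llrank_count]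
  rw [count_succ_col π ((i:ℕ)+1) j, count_succ_col π (i:ℕ) j, count_succ_row π i (j:ℕ)]
  constructor
  · intro h
    have hinv : π⁻¹ j = i := by rw [← h]; simp
    rw [hinv]
    have hij : ¬ ((π i : ℕ) < (j : ℕ)) := by rw [h]; omega
    simp [hij]
  · rintro ⟨h1, -, h3⟩
    have hle : (i : ℕ) ≤ ((π⁻¹ j : Fin n) : ℕ) := by
      by_contra hc
      simp [hc] at h3
      exact hc h3
    have hlt : ¬ ((i : ℕ) + 1 ≤ ((π⁻¹ j : Fin n) : ℕ)) := by
      by_contra hc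
      simp [hc] at h1
      change ((π⁻¹ j : Fin n) : ℕ) ≤ (i : ℕ) at h1
      omega
    have : ((π⁻¹ j : Fin n) : ℕ) = (i : ℕ) := by omega
    have : π⁻¹ j = i := Fin.ext this
    rw [← this]; simp
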